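/- Fix j and δ ∈ [1/2, 1]. For each label i ≠ ℓ_j (where ℓ_j attains α_j = x(v_j, ℓ_j) = max_i x(v_j,i)): Σ_{i ≠ ℓ_j} ∫_0^δ ( f(A_j(i,θ)) − f(A_{j−1}(i,θ)) ) dθ ≥ f(V_j) − f(V_{j−1}) + α_j (f(V_{j−1}) − f(V_j)), where A_j(i,θ) = A(i,θ) ∩ V_j. -/

import Mathlib

open MeasureTheory Set

lemma measurable_fset {n k : ℕ} (f : Set (Fin n) → ℝ) (x : Fin n → Fin k → ℝ) (m : ℕ) (i : Fin k) :
    Measurable fun θ : ℝ => f {v : Fin n | v.val < m ∧ θ ≤ x v i} := by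
  letI : MeasurableSpace (Set (Fin n)) := ⊤
  haveI : MeasurableSingletonClass (Set (Fin n)) := ⟨fun _ => trivial⟩
  have hσ : Measurable fun θ : ℝ => ({v : Fin n | v.val < m ∧ θ ≤ x v i} : Set (Fin n)) := by
    apply measurable_to_countable'
    intro S
    have hset : (fun θ : ℝ => ({v : Fin n | v.val < m ∧ θ ≤ x v i} : Set (Fin n))) ⁻¹' {S}
        = ⋂ v : Fin n, {θ : ℝ | (v.val < m ∧ θ ≤ x v i) ↔ v ∈ S} := by
      ext θ
      simp only [Set.mem_preimage, Set.mem_singleton_iff, Set.mem_iInter, Set.mem_setOf_eq,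
        Set.ext_iff]
    rw [hset]
    apply MeasurableSet.iInter
    intro v
    by_cases hv : v.val < m
    · by_cases hS : v ∈ S
      · have : {θ : ℝ | (v.val < m ∧ θ ≤ x v i) ↔ v ∈ S} = Set.Iic (x v i) := by
          ext θ; simp [hv, hS]
        rw [this]; exact measurableSet_Iic
      · have : {θ : ℝ | (v.val < m ∧ θ ≤ x v i) ↔ v ∈ S} = Set.Ioi (x v i) := by
          ext θ; simp [hv, hS]
        rw [this]; exact measurableSet_Ioi
    · by_cases hS : v ∈ S
      · have : {θ : ℝ | (v.val < m ∧ θ ≤ x v i) ↔ v ∈ S} = ∅ := by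
          ext θ; simp [hv, hS]
        rw [this]; exact MeasurableSet.empty
      · have : {θ : ℝ | (v.val < m ∧ θ ≤ x v i) ↔ v ∈ S} = Set.univ := by
          ext θ; simp [hv, hS]
        rw [this]; exact MeasurableSet.univ
  exact measurable_from_top.comp hσ

lemma intInt_fset {n k : ℕ} (f : Set (Fin n) → ℝ) (x : Fin n → Fin k → ℝ) (m : ℕ) (i : Fin k)
    (a b : ℝ) :
    IntervalIntegrable (fun θ : ℝ => f {v : Fin n | v.val < m ∧ θ ≤ x v i}) volume a b := by
  rw [intervalIntegrable_iff]
  apply Measure.integrableOn_of_bounded (M := ∑ S : Set (Fin n), |f S|)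
  · exact (measure_Ioc_lt_top).ne
  · exact (measurable_fset f x m i).aestronglyMeasurable
  · filter_upwards with θ
    have : |f {v : Fin n | v.val < m ∧ θ ≤ x v i}| ≤ ∑ S : Set (Fin n), |f S| :=
      Finset.single_le_sum (fun S _ => abs_nonneg (f S)) (Finset.mem_univ _)
    simpa using this

lemma indicator_integral (c β δ : ℝ) (h0 : 0 ≤ β) (hβδ : β ≤ δ) :
    ∫ θ in (0:ℝ)..δ, (if θ ≤ β then c else 0) = c * β := by
  have h0δ : (0:ℝ) ≤ δ := le_trans h0 hβδ
  have hfun : (fun θ : ℝ => if θ ≤ β then c else 0) = (Set.Iic β).indicator (fun _ => c) := by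
    ext θ; simp [Set.indicator_apply]
  rw [intervalIntegral.integral_of_le h0δ]
  rw [show (fun θ : ℝ => if θ ≤ β then c else 0) = (Set.Iic β).indicator (fun _ => c) from hfun]
  rw [MeasureTheory.setIntegral_indicator measurableSet_Iic]
  have hI : Set.Ioc (0:ℝ) δ ∩ Set.Iic β = Set.Ioc 0 β := by
    ext θ
    simp only [Set.mem_inter_iff, Set.mem_Ioc, Set.mem_Iic]
    constructor
    · rintro ⟨⟨h1, _⟩, h3⟩; exact ⟨h1, h3⟩
    · rintro ⟨h1, h2⟩; exact ⟨⟨h1, le_trans h2 hβδ⟩, h2⟩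
  rw [hI, MeasureTheory.setIntegral_const, measureReal_def, Real.volume_Ioc,
    ENNReal.toReal_ofReal (by linarith)]
  simp [smul_eq_mul]; ring

lemma indicator_intInt (c β a b : ℝ) :
    IntervalIntegrable (fun θ : ℝ => if θ ≤ β then c else 0) volume a b := by
  rw [intervalIntegrable_iff]
  apply Measure.integrableOn_of_bounded (M := |c|) measure_Ioc_lt_top.ne
  · have hfun : (fun θ : ℝ => if θ ≤ β then c else 0) = (Set.Iic β).indicator (fun _ => c) := by
      ext θ; simp [Set.indicator_apply]
    rw [hfun]
    exact (measurable_const.indicator measurableSet_Iic).aestronglyMeasurable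
  · filter_upwards with θ
    by_cases h : θ ≤ β <;> simp [h, abs_nonneg]

theorem charging_lemma_one_fixed_j {n k : ℕ} (f : Set (Fin n) → ℝ)
    (hsub : ∀ A B : Set (Fin n), f A + f B ≥ f (A ∩ B) + f (A ∪ B))
    (x : Fin n → Fin k → ℝ)
    (hx0 : ∀ v i, 0 ≤ x v i) (hxsum : ∀ v, ∑ i, x v i = 1)
    (δ : ℝ) (hδ : δ ∈ Set.Icc (1/2 : ℝ) 1)
    (j : ℕ) (hj1 : 1 ≤ j) (hjn : j ≤ n)
    (ℓ : Fin k) (hℓ : ∀ i : Fin k, x ⟨j - 1, by omega⟩ i ≤ x ⟨j - 1, by omega⟩ ℓ) :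
    ∑ i ∈ Finset.univ.erase ℓ,
        ∫ θ in (0:ℝ)..δ,
          (f {v : Fin n | v.val < j ∧ θ ≤ x v i}
            - f {v : Fin n | v.val < j - 1 ∧ θ ≤ x v i}) ≥
      f {v : Fin n | v.val < j} - f {v : Fin n | v.val < j - 1}
        + x ⟨j - 1, by omega⟩ ℓ *
            (f {v : Fin n | v.val < j - 1} - f {v : Fin n | v.val < j}) := by
  set w : Fin n := ⟨j - 1, by omega⟩ with hw
  set c : ℝ := f {v : Fin n | v.val < j} - f {v : Fin n | v.val < j - 1} with hc
  -- each off-label mass is ≤ 1/2 ≤ δ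
  have hβδ : ∀ i : Fin k, i ≠ ℓ → x w i ≤ δ := by
    intro i hi
    have h2 : x w i + x w ℓ ≤ ∑ t, x w t := by
      have hsub' : ({i, ℓ} : Finset (Fin k)) ⊆ Finset.univ := Finset.subset_univ _
      have := Finset.sum_le_sum_of_subset_of_nonneg hsub' (fun t _ _ => hx0 w t)
      rwa [Finset.sum_pair hi] at this
    have hβα : x w i ≤ x w ℓ := hℓ i
    have : x w i ≤ 1/2 := by
      have := hxsum w; linarith
    linarith [hδ.1]
  -- key per-label bound
  have key : ∀ i ∈ Finset.univ.erase ℓ,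
      c * x w i ≤ ∫ θ in (0:ℝ)..δ,
        (f {v : Fin n | v.val < j ∧ θ ≤ x v i}
          - f {v : Fin n | v.val < j - 1 ∧ θ ≤ x v i}) := by
    intro i hi
    have hiℓ : i ≠ ℓ := Finset.ne_of_mem_erase hi
    have h0β : 0 ≤ x w i := hx0 w i
    have h0δ : (0:ℝ) ≤ δ := le_trans (by norm_num) hδ.1
    have hmono : ∀ θ ∈ Set.Icc (0:ℝ) δ,
        (if θ ≤ x w i then c else 0) ≤
          f {v : Fin n | v.val < j ∧ θ ≤ x v i}
            - f {v : Fin n | v.val < j - 1 ∧ θ ≤ x v i} := by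
      intro θ _
      by_cases hθ : θ ≤ x w i
      · simp only [if_pos hθ]
        have hA : {v : Fin n | v.val < j ∧ θ ≤ x v i}
            = insert w {v : Fin n | v.val < j - 1 ∧ θ ≤ x v i} := by
          ext u
          simp only [Set.mem_setOf_eq, Set.mem_insert_iff]
          constructor
          · rintro ⟨h1, h2⟩
            rcases Nat.lt_or_ge u.val (j - 1) with h | h
            · exact Or.inr ⟨h, h2⟩
            · left; apply Fin.ext; simp [hw]; omega
          · rintro (rfl | ⟨h1, h2⟩)
            · exact ⟨by simp [hw]; omega, hθ⟩
            · exact ⟨by omega, h2⟩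
        have hV : {v : Fin n | v.val < j} = insert w {v : Fin n | v.val < j - 1} := by
          ext u
          simp only [Set.mem_setOf_eq, Set.mem_insert_iff, Fin.ext_iff]
          try simp only [hw]
          omega
        have hcap : insert w {v : Fin n | v.val < j - 1 ∧ θ ≤ x v i}
            ∩ {v : Fin n | v.val < j - 1} = {v : Fin n | v.val < j - 1 ∧ θ ≤ x v i} := by
          ext u
          simp only [Set.mem_inter_iff, Set.mem_insert_iff, Set.mem_setOf_eq, Fin.ext_iff]
          try simp only [hw]
          constructor
          · rintro ⟨(h | ⟨h1, h2⟩), h3⟩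
            · omega
            · exact ⟨h1, h2⟩
          · rintro ⟨h1, h2⟩; exact ⟨Or.inr ⟨h1, h2⟩, h1⟩
        have hcup : insert w {v : Fin n | v.val < j - 1 ∧ θ ≤ x v i}
            ∪ {v : Fin n | v.val < j - 1} = {v : Fin n | v.val < j} := by
          ext u
          simp only [Set.mem_union, Set.mem_insert_iff, Set.mem_setOf_eq, Fin.ext_iff]
          try simp only [hw]
          constructor
          · rintro ((h | ⟨h1, h2⟩) | h) <;> omega
          · intro h
            rcases Nat.lt_or_ge u.val (j - 1) with h' | h'
            · exact Or.inr h'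
            · exact Or.inl (Or.inl (by omega))
        have := hsub (insert w {v : Fin n | v.val < j - 1 ∧ θ ≤ x v i})
          {v : Fin n | v.val < j - 1}
        rw [hcap, hcup] at this
        rw [hA]
        simp only [hc]
        linarith
      · simp only [if_neg hθ]
        have hA : {v : Fin n | v.val < j ∧ θ ≤ x v i}
            = {v : Fin n | v.val < j - 1 ∧ θ ≤ x v i} := by
          ext u
          simp only [Set.mem_setOf_eq]
          constructor
          · rintro ⟨h1, h2⟩
            refine ⟨?_, h2⟩
            rcases Nat.lt_or_ge u.val (j - 1) with h | h
            · exact h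
            · exfalso
              have : u = w := by apply Fin.ext; simp [hw]; omega
              rw [this] at h2; exact hθ h2
          · rintro ⟨h1, h2⟩; exact ⟨by omega, h2⟩
        rw [hA]
        simp
    have hint : IntervalIntegrable
        (fun θ : ℝ => f {v : Fin n | v.val < j ∧ θ ≤ x v i}
          - f {v : Fin n | v.val < j - 1 ∧ θ ≤ x v i}) volume 0 δ :=
      (intInt_fset f x j i 0 δ).sub (intInt_fset f x (j - 1) i 0 δ)
    have := intervalIntegral.integral_mono_on h0δ (indicator_intInt c (x w i) 0 δ) hint hmono
    rw [indicator_integral c (x w i) δ h0β (hβδ i hiℓ)] at this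
    exact this
  have hsum : ∑ i ∈ Finset.univ.erase ℓ, c * x w i ≤
      ∑ i ∈ Finset.univ.erase ℓ,
        ∫ θ in (0:ℝ)..δ,
          (f {v : Fin n | v.val < j ∧ θ ≤ x v i}
            - f {v : Fin n | v.val < j - 1 ∧ θ ≤ x v i}) :=
    Finset.sum_le_sum key
  have herase : ∑ i ∈ Finset.univ.erase ℓ, x w i = 1 - x w ℓ := by
    have := Finset.add_sum_erase Finset.univ (x w) (Finset.mem_univ ℓ)
    rw [hxsum w] at this
    linarith
  have : ∑ i ∈ Finset.univ.erase ℓ, c * x w i = c * (1 - x w ℓ) := by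
    rw [← Finset.mul_sum, herase]
  rw [this] at hsum
  simp only [ge_iff_le, hc] at hsum ⊢
  nlinarith [hsum]
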